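/- Let D be an n×n irreducible Metzler matrix with zero column sums and μ ∈ ℝⁿ with all μᵢ > 0. Then for J := D − diag(μ), the inverse satisfies −J⁻¹ ≫ 0, i.e. every entry of −J⁻¹ is strictly positive. Consequently, for any Λ > 0 (nonnegative, nonzero), the unique solution x* of J x* = −Λ has all components strictly positive. -/

import Mathlib

/-- Nonnegativity for row-dominant matrices with nonpositive off-diagonal entries. -/
lemma key_nonneg {n : ℕ} (A : Matrix (Fin n) (Fin n) ℝ)
    (hoff : ∀ i j, i ≠ j → A i j ≤ 0)
    (hrow : ∀ i, 0 < ∑ j, A i j)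
    (x : Fin n → ℝ) (hb : ∀ i, 0 ≤ A.mulVec x i) :
    ∀ i, 0 ≤ x i := by
  by_contra hc
  push_neg at hc
  obtain ⟨i1, hi1⟩ := hc
  have hne : (Finset.univ : Finset (Fin n)).Nonempty := ⟨i1, Finset.mem_univ _⟩
  obtain ⟨i0, -, hmin⟩ := Finset.exists_min_image Finset.univ x hne
  have hx0 : x i0 < 0 := lt_of_le_of_lt (hmin i1 (Finset.mem_univ _)) hi1
  have h1 : A.mulVec x i0 ≤ (∑ j, A i0 j) * x i0 := by
    rw [Matrix.mulVec, dotProduct, Finset.sum_mul]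
    refine Finset.sum_le_sum fun j _ => ?_
    rcases eq_or_ne j i0 with h | h
    · subst h; exact le_refl _
    · exact mul_le_mul_of_nonpos_left (hmin j (Finset.mem_univ _)) (hoff i0 j (Ne.symm h))
  have h2 : (∑ j, A i0 j) * x i0 < 0 := mul_neg_of_pos_of_neg (hrow i0) hx0
  exact absurd (hb i0) (not_le.mpr (lt_of_le_of_lt h1 h2))

/-- Strict positivity using irreducibility. -/
lemma key_pos {n : ℕ} (A : Matrix (Fin n) (Fin n) ℝ)
    (hoff : ∀ i j, i ≠ j → A i j ≤ 0)
    (hrow : ∀ i, 0 < ∑ j, A i j)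
    (hconn : ∀ i j, i ≠ j → Relation.TransGen (fun p q : Fin n => A p q < 0) i j)
    (x b : Fin n → ℝ) (hAx : A.mulVec x = b) (hb : ∀ i, 0 ≤ b i) (hbne : b ≠ 0) :
    ∀ i, 0 < x i := by
  have hx : ∀ i, 0 ≤ x i := key_nonneg A hoff hrow x (by rw [hAx]; exact hb)
  have step : ∀ i, x i = 0 → ∀ j, A i j < 0 → x j = 0 := by
    intro i hxi j hAij
    by_contra hxj
    have hxj' : 0 < x j := lt_of_le_of_ne (hx j) (Ne.symm hxj)
    have hji : j ≠ i := by rintro rfl; exact absurd hxi (ne_of_gt hxj')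
    have hsum : ∑ k ∈ Finset.univ.erase j, A i k * x k ≤ 0 := by
      refine Finset.sum_nonpos fun k _ => ?_
      rcases eq_or_ne k i with rfl | hki
      · rw [hxi]; simp
      · exact mul_nonpos_iff.mpr (Or.inr ⟨hoff i k (Ne.symm hki), hx k⟩)
    have hlt : b i < 0 := by
      have hb' : b i = ∑ k, A i k * x k := by
        rw [← hAx]; simp [Matrix.mulVec, dotProduct]
      rw [hb', ← Finset.add_sum_erase _ _ (Finset.mem_univ j)]
      have := mul_neg_of_neg_of_pos hAij hxj'
      linarith
    exact absurd (hb i) (not_le.mpr hlt)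
  have hex : ∃ i0, 0 < x i0 := by
    by_contra hc
    push_neg at hc
    have hx0 : x = 0 := funext fun i => le_antisymm (hc i) (hx i)
    apply hbne
    rw [← hAx, hx0, Matrix.mulVec_zero]
  obtain ⟨i0, hi0⟩ := hex
  intro i
  rcases eq_or_ne i i0 with rfl | hne
  · exact hi0
  · by_contra hc
    have hxi : x i = 0 := le_antisymm (not_lt.mp hc) (hx i)
    have hz : ∀ j, Relation.TransGen (fun p q : Fin n => A p q < 0) i j → x j = 0 := by
      intro j h
      induction h with
      | single h => exact step i hxi _ h
      | tail h1 h2 ih => exact step _ ih _ h2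
    exact absurd hi0 (by rw [hz i0 (hconn i i0 hne)]; simp)

theorem stmt9 {n : ℕ} (D : Matrix (Fin n) (Fin n) ℝ) (μ : Fin n → ℝ)
    (hmetz : ∀ i j, i ≠ j → 0 ≤ D i j)
    (hcol : ∀ j, D j j = -∑ i ∈ Finset.univ.erase j, D i j)
    (hirr : ∀ i j : Fin n, i ≠ j → Relation.TransGen (fun p q : Fin n => 0 < D q p) i j)
    (hμ : ∀ i, 0 < μ i)
    (J : Matrix (Fin n) (Fin n) ℝ) (hJ : J = D - Matrix.diagonal μ) :
    IsUnit J ∧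
    (∀ i j, 0 < -(J⁻¹ i j)) ∧
    ∀ Λ : Fin n → ℝ, (∀ i, 0 ≤ Λ i) → Λ ≠ 0 →
      (∃! x : Fin n → ℝ, J.mulVec x = -Λ) ∧
      ∀ x : Fin n → ℝ, J.mulVec x = -Λ → ∀ i, 0 < x i := by
  have hDdiag : ∀ k, D k k ≤ 0 := by
    intro k
    rw [hcol k]
    refine neg_nonpos_of_nonneg (Finset.sum_nonneg fun i hi => ?_)
    exact hmetz i k (Finset.mem_erase.mp hi).1
  have hsumD : ∀ i, ∑ j, D j i = 0 := by
    intro i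
    rw [← Finset.add_sum_erase Finset.univ (fun j => D j i) (Finset.mem_univ i), hcol i]
    ring
  -- invertibility via column strict diagonal dominance
  have hdet : J.det ≠ 0 := by
    apply det_ne_zero_of_sum_col_lt_diag
    intro k
    have hJkk : J k k = D k k - μ k := by
      simp [hJ, Matrix.sub_apply, Matrix.diagonal_apply_eq]
    have h1 : ∑ i ∈ Finset.univ.erase k, ‖J i k‖ = -D k k := by
      rw [hcol k, neg_neg]
      refine Finset.sum_congr rfl fun i hi => ?_
      have hik := (Finset.mem_erase.mp hi).1
      rw [hJ]
      simp [Matrix.sub_apply, Matrix.diagonal_apply_ne _ hik,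
        Real.norm_eq_abs, abs_of_nonneg (hmetz i k hik)]
    have h2 : ‖J k k‖ = -(D k k) + μ k := by
      rw [hJkk, Real.norm_eq_abs, abs_of_neg (by linarith [hDdiag k, hμ k])]
      ring
    rw [h1, h2]
    linarith [hμ k]
  have hunit : IsUnit J := by
    rw [Matrix.isUnit_iff_isUnit_det]
    exact isUnit_iff_ne_zero.mpr hdet
  -- set up A = -Jᵀ and verify hypotheses of key_pos
  set A : Matrix (Fin n) (Fin n) ℝ := -(J.transpose) with hA
  have hAentry : ∀ i j, A i j = -(J j i) := by
    intro i j; simp [hA]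
  have hAoff : ∀ i j, i ≠ j → A i j ≤ 0 := by
    intro i j hij
    rw [hAentry, hJ]
    simp [Matrix.sub_apply, Matrix.diagonal_apply_ne _ (Ne.symm hij)]
    exact hmetz j i (Ne.symm hij)
  have hArow : ∀ i, 0 < ∑ j, A i j := by
    intro i
    have hdiagsum : ∑ j, Matrix.diagonal μ j i = μ i := by
      rw [Finset.sum_eq_single i]
      · simp
      · intro b _ hbi; exact Matrix.diagonal_apply_ne _ hbi
      · intro h; exact absurd (Finset.mem_univ i) h
    have : ∑ j, A i j = μ i := by
      have : ∑ j, A i j = -∑ j, (D j i - Matrix.diagonal μ j i) := by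
        rw [← Finset.sum_neg_distrib]
        refine Finset.sum_congr rfl fun j _ => ?_
        rw [hAentry, hJ]; rfl
      rw [this, Finset.sum_sub_distrib, hsumD i, hdiagsum]
      ring
    rw [this]; exact hμ i
  have hAconn : ∀ i j, i ≠ j → Relation.TransGen (fun p q : Fin n => A p q < 0) i j := by
    intro i j hij
    refine Relation.TransGen.mono ?_ i j (hirr i j hij)
    intro p q hpq
    have hqp : q ≠ p := by
      rintro rfl; exact absurd hpq (not_lt.mpr (hDdiag q))
    rw [hAentry, hJ]
    simp [Matrix.sub_apply, Matrix.diagonal_apply_ne _ hqp]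
    linarith
  -- entrywise positivity of -J⁻¹
  have hinv : ∀ i j, 0 < -(J⁻¹ i j) := by
    intro i j
    have hcolx : A.mulVec (fun k => -(J⁻¹ i k)) = fun p => if i = p then (1:ℝ) else 0 := by
      funext p
      have h1 : A.mulVec (fun k => -(J⁻¹ i k)) p = ∑ q, J⁻¹ i q * J q p := by
        simp only [Matrix.mulVec, dotProduct]
        refine Finset.sum_congr rfl fun q _ => ?_
        rw [hAentry]; ring
      rw [h1, ← Matrix.mul_apply, Matrix.nonsing_inv_mul J (isUnit_iff_ne_zero.mpr hdet),
        Matrix.one_apply]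
    have := key_pos A hAoff hArow hAconn (fun k => -(J⁻¹ i k)) _ hcolx
      (fun p => by split <;> norm_num)
      (by
        intro h
        have := congrFun h i
        simp at this)
    exact this j
  refine ⟨hunit, hinv, fun Λ hΛ hΛne => ?_⟩
  have hdet' : IsUnit J.det := isUnit_iff_ne_zero.mpr hdet
  have hsol : ∀ x : Fin n → ℝ, J.mulVec x = -Λ → x = J⁻¹.mulVec (-Λ) := by
    intro x hx
    rw [← hx, Matrix.mulVec_mulVec, Matrix.nonsing_inv_mul J hdet', Matrix.one_mulVec]
  have hpos : ∀ x : Fin n → ℝ, J.mulVec x = -Λ → ∀ i, 0 < x i := by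
    intro x hx i
    rw [hsol x hx]
    have : J⁻¹.mulVec (-Λ) i = ∑ j, (-(J⁻¹ i j)) * Λ j := by
      simp only [Matrix.mulVec, dotProduct]
      refine Finset.sum_congr rfl fun j _ => ?_
      simp only [Pi.neg_apply]; ring
    rw [this]
    obtain ⟨j0, hj0⟩ : ∃ j0, Λ j0 ≠ 0 := by
      by_contra hcon
      push_neg at hcon
      exact hΛne (funext hcon)
    refine Finset.sum_pos' (fun j _ => mul_nonneg (le_of_lt (hinv i j)) (hΛ j)) ?_
    exact ⟨j0, Finset.mem_univ _, mul_pos (hinv i j0) (lt_of_le_of_ne (hΛ j0) (Ne.symm hj0))⟩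
  refine ⟨⟨J⁻¹.mulVec (-Λ), ?_, fun y hy => hsol y hy⟩, hpos⟩
  show J.mulVec (J⁻¹.mulVec (-Λ)) = -Λ
  rw [Matrix.mulVec_mulVec, Matrix.mul_nonsing_inv J hdet', Matrix.one_mulVec]
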